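/- Let S be a finite set of planar points with distinct x-coordinates and distinct y-coordinates, and Q=[a,b]×[c,d]. Define p₁ to be the point of S∩Q with maximal x-coordinate, and inductively pᵢ₊₁ to be the point of maximal x-coordinate in S ∩ ([a, pᵢ.x) × (pᵢ.y, d]). Then the sequence p₁, p₂, … (until the query region becomes empty) enumerates exactly the maximal points of S∩Q, in order of strictly decreasing x-coordinate and strictly increasing y-coordinate. -/
import Mathlib


/-- **Enumerating maximal points by iterated range successor queries.**
`S` has pairwise distinct `x`- and `y`-coordinates, `Q = [a,b] × [c,d]`.
`p 0` is the point of maximal `x`-coordinate in `S ∩ Q`, and `p (i+1)` is the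
point of maximal `x`-coordinate in `S ∩ ([a, (p i).x) × ((p i).y, d])`; the
iteration stops (after `k` points) when this region contains no point of `S`.
Then the sequence enumerates exactly the maximal points of `S ∩ Q`, with
strictly decreasing `x`-coordinates and strictly increasing `y`-coordinates. -/
theorem stmt6 (S : Finset (ℝ × ℝ)) (a b c d : ℝ)
    (hdist : ∀ p ∈ S, ∀ q ∈ S, p ≠ q → p.1 ≠ q.1 ∧ p.2 ≠ q.2)
    (Q : Set (ℝ × ℝ)) (hQ : Q = {p | a ≤ p.1 ∧ p.1 ≤ b ∧ c ≤ p.2 ∧ p.2 ≤ d})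
    (R : ℝ × ℝ → Set (ℝ × ℝ))
    (hR : R = fun w => {r | a ≤ r.1 ∧ r.1 < w.1 ∧ w.2 < r.2 ∧ r.2 ≤ d})
    (k : ℕ) (hk : 0 < k) (p : Fin k → ℝ × ℝ)
    (h0 : p ⟨0, hk⟩ ∈ S ∧ p ⟨0, hk⟩ ∈ Q ∧ ∀ r ∈ S, r ∈ Q → r.1 ≤ (p ⟨0, hk⟩).1)
    (hstep : ∀ i j : Fin k, (j : ℕ) = (i : ℕ) + 1 →
      p j ∈ S ∧ p j ∈ R (p i) ∧ ∀ r ∈ S, r ∈ R (p i) → r.1 ≤ (p j).1)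
    (hterm : ∀ r ∈ S, r ∉ R (p ⟨k - 1, Nat.sub_lt hk one_pos⟩)) :
    (∀ i j : Fin k, i < j → (p j).1 < (p i).1 ∧ (p i).2 < (p j).2) ∧
    Set.range p =
      {r | r ∈ S ∧ r ∈ Q ∧ ∀ s ∈ S, s ∈ Q → s ≠ r → ¬(r.1 ≤ s.1 ∧ r.2 ≤ s.2)} := by
  subst hQ hR
  simp only [Set.mem_setOf_eq] at h0 hstep hterm ⊢
  -- every p i is in S and in Q
  have hmem : ∀ n (hn : n < k), p ⟨n, hn⟩ ∈ S ∧
      (a ≤ (p ⟨n, hn⟩).1 ∧ (p ⟨n, hn⟩).1 ≤ b ∧ c ≤ (p ⟨n, hn⟩).2 ∧ (p ⟨n, hn⟩).2 ≤ d) := by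
    intro n
    induction n with
    | zero => intro hn; exact ⟨h0.1, h0.2.1⟩
    | succ m ih =>
      intro hn
      have hm : m < k := Nat.lt_of_succ_lt hn
      obtain ⟨hS, hQm⟩ := ih hm
      obtain ⟨hS', hR', -⟩ := hstep ⟨m, hm⟩ ⟨m + 1, hn⟩ rfl
      exact ⟨hS', hR'.1, le_trans hR'.2.1.le hQm.2.1,
        le_trans hQm.2.2.1 hR'.2.2.1.le, hR'.2.2.2⟩
  -- monotonicity
  have mono : ∀ m (hm : m < k), ∀ n (hn : n < k), n < m →
      (p ⟨m, hm⟩).1 < (p ⟨n, hn⟩).1 ∧ (p ⟨n, hn⟩).2 < (p ⟨m, hm⟩).2 := by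
    intro m
    induction m with
    | zero => intro _ n _ h; omega
    | succ m ih =>
      intro hm n hn hlt
      have hm' : m < k := Nat.lt_of_succ_lt hm
      obtain ⟨-, hR', -⟩ := hstep ⟨m, hm'⟩ ⟨m + 1, hm⟩ rfl
      rcases Nat.lt_succ_iff_lt_or_eq.mp hlt with h | h
      · obtain ⟨h1, h2⟩ := ih hm' n hn h
        exact ⟨lt_trans hR'.2.1 h1, lt_trans h2 hR'.2.2.1⟩
      · subst h
        exact ⟨hR'.2.1, hR'.2.2.1⟩
  -- no point of S ∩ Q strictly dominates any p i
  have M : ∀ n (hn : n < k), ∀ s ∈ S,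
      (a ≤ s.1 ∧ s.1 ≤ b ∧ c ≤ s.2 ∧ s.2 ≤ d) →
      ¬((p ⟨n, hn⟩).1 < s.1 ∧ (p ⟨n, hn⟩).2 < s.2) := by
    intro n
    induction n with
    | zero =>
      intro hn s hs hsQ ⟨h1, _⟩
      exact absurd (h0.2.2 s hs hsQ) (not_le.mpr h1)
    | succ m ih =>
      intro hn s hs hsQ ⟨h1, h2⟩
      have hm : m < k := Nat.lt_of_succ_lt hn
      obtain ⟨-, hR', hmax⟩ := hstep ⟨m, hm⟩ ⟨m + 1, hn⟩ rfl
      rcases lt_trichotomy s.1 (p ⟨m, hm⟩).1 with h | h | h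
      · have : s.1 ≤ (p ⟨m + 1, hn⟩).1 :=
          hmax s hs ⟨hsQ.1, h, lt_trans hR'.2.2.1 h2, hsQ.2.2.2⟩
        exact absurd this (not_le.mpr h1)
      · have hsne : s ≠ p ⟨m, hm⟩ := by
          intro he
          rw [he] at h2
          exact absurd hR'.2.2.1 (not_lt.mpr h2.le)
        exact (hdist s hs _ (hmem m hm).1 hsne).1 h
      · exact ih hm s hs hsQ ⟨h, lt_trans hR'.2.2.1 h2⟩
  constructor
  · intro i j hij
    have := mono j.1 j.2 i.1 i.2 hij
    simpa using this
  · ext r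
    simp only [Set.mem_range, Set.mem_setOf_eq]
    constructor
    · rintro ⟨i, rfl⟩
      obtain ⟨hS, hQ⟩ := hmem i.1 i.2
      simp only [Fin.eta] at hS hQ
      refine ⟨hS, hQ, fun s hs hsQ hne ⟨h1, h2⟩ => ?_⟩
      have hd := hdist s hs _ hS hne
      have := M i.1 i.2 s hs hsQ
      simp only [Fin.eta] at this
      exact this ⟨lt_of_le_of_ne h1 (Ne.symm hd.1), lt_of_le_of_ne h2 (Ne.symm hd.2)⟩
    · rintro ⟨hS, hQ, hmax⟩
      by_contra hnr
      push_neg at hnr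
      have D : ∀ n (hn : n < k), r.1 < (p ⟨n, hn⟩).1 ∧ (p ⟨n, hn⟩).2 < r.2 := by
        intro n
        induction n with
        | zero =>
          intro hn
          have hne : p ⟨0, hn⟩ ≠ r := fun h => hnr ⟨0, hn⟩ h
          have hd := hdist (p ⟨0, hn⟩) h0.1 r hS hne
          have h1 : r.1 < (p ⟨0, hn⟩).1 :=
            lt_of_le_of_ne (h0.2.2 r hS hQ) (Ne.symm hd.1)
          have h2 : ¬(r.1 ≤ (p ⟨0, hn⟩).1 ∧ r.2 ≤ (p ⟨0, hn⟩).2) :=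
            hmax _ h0.1 h0.2.1 hne
          push_neg at h2
          exact ⟨h1, h2 h1.le⟩
        | succ m ih =>
          intro hn
          have hm : m < k := Nat.lt_of_succ_lt hn
          obtain ⟨h1, h2⟩ := ih hm
          obtain ⟨hS', hR', hmax'⟩ := hstep ⟨m, hm⟩ ⟨m + 1, hn⟩ rfl
          have hrR : a ≤ r.1 ∧ r.1 < (p ⟨m, hm⟩).1 ∧ (p ⟨m, hm⟩).2 < r.2 ∧ r.2 ≤ d :=
            ⟨hQ.1, h1, h2, hQ.2.2.2⟩
          have hle : r.1 ≤ (p ⟨m + 1, hn⟩).1 := hmax' r hS hrR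
          have hne : p ⟨m + 1, hn⟩ ≠ r := fun h => hnr ⟨m + 1, hn⟩ h
          have hd := hdist (p ⟨m + 1, hn⟩) hS' r hS hne
          have h1' : r.1 < (p ⟨m + 1, hn⟩).1 := lt_of_le_of_ne hle (Ne.symm hd.1)
          have hQ' := (hmem (m + 1) hn).2
          have h2' : ¬(r.1 ≤ (p ⟨m + 1, hn⟩).1 ∧ r.2 ≤ (p ⟨m + 1, hn⟩).2) :=
            hmax _ hS' ⟨hQ'.1, hQ'.2.1, hQ'.2.2.1, hQ'.2.2.2⟩ hne
          push_neg at h2'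
          exact ⟨h1', h2' h1'.le⟩
      have hlast := D (k - 1) (Nat.sub_lt hk one_pos)
      exact hterm r hS ⟨hQ.1, hlast.1, hlast.2, hQ.2.2.2⟩
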